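/- Let k > 0, let α ∈ ℝ³ be horizontal (α·e₃ = 0), let β ∈ ℂ with β ≠ 0 and α·α + β² = k², and set ζ = α + β e₃. Let Ẽ ∈ ℂ³ be tangential (Ẽ·e₃ = 0), define C = Ẽ×e₃ − β⁻¹(α·(Ẽ×e₃)) e₃ and E(x) = C exp(i ζ·x). Then ζ·C = 0, e₃×E(x) = Ẽ exp(i ζ·x), and the tangential component of curl E satisfies the Dirichlet-to-Neumann symbol identity (e₃ × curl E(x)) × e₃ = −(1/(iβ)) [ k² Ẽ − (α·Ẽ) α ] exp(i ζ·x) for all x ∈ ℝ³. -/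
import Mathlib


/-- Partial derivative `∂ⱼf` of a scalar field `f : ℝ³ → ℂ` in the `j`-th coordinate
direction, defined via the one-dimensional derivative. -/
noncomputable def pd (j : Fin 3) (f : (Fin 3 → ℝ) → ℂ) (x : Fin 3 → ℝ) : ℂ :=
  deriv (fun t : ℝ => f (Function.update x j t)) (x j)

/-- `curl E = (∂₂E₃ − ∂₃E₂, ∂₃E₁ − ∂₁E₃, ∂₁E₂ − ∂₂E₁)`. -/
noncomputable def curl3 (E : (Fin 3 → ℝ) → Fin 3 → ℂ) (x : Fin 3 → ℝ) : Fin 3 → ℂ :=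
  ![pd 1 (fun y => E y 2) x - pd 2 (fun y => E y 1) x,
    pd 2 (fun y => E y 0) x - pd 0 (fun y => E y 2) x,
    pd 0 (fun y => E y 1) x - pd 1 (fun y => E y 0) x]

/-- Bilinear dot product on `ℂ³` (no conjugation). -/
def cdot (a b : Fin 3 → ℂ) : ℂ := a 0 * b 0 + a 1 * b 1 + a 2 * b 2

/-- Bilinearly extended cross product on `ℂ³`. -/
def ccross (a b : Fin 3 → ℂ) : Fin 3 → ℂ :=
  ![a 1 * b 2 - a 2 * b 1, a 2 * b 0 - a 0 * b 2, a 0 * b 1 - a 1 * b 0]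

/-- `e₃ = (0,0,1)` in `ℂ³`. -/
def e3c : Fin 3 → ℂ := ![0, 0, 1]

lemma pd_exp (ζ : Fin 3 → ℂ) (c : ℂ) (j : Fin 3) (x : Fin 3 → ℝ) :
    pd j (fun y => c * Complex.exp (Complex.I * cdot ζ (fun i => (y i : ℂ)))) x
      = Complex.I * ζ j * c * Complex.exp (Complex.I * cdot ζ (fun i => (x i : ℂ))) := by
  have key : ∀ t : ℝ, cdot ζ (fun i => ((Function.update x j t) i : ℂ))
      = ζ j * t + (cdot ζ (fun i => (x i : ℂ)) - ζ j * x j) := by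
    intro t; fin_cases j <;> simp [cdot, Function.update] <;> ring
  set r := cdot ζ (fun i => (x i : ℂ)) - ζ j * x j with hr
  have h1 : HasDerivAt (fun t : ℝ => (t : ℂ)) 1 (x j) := by
    simpa using (hasDerivAt_id (x j)).ofReal_comp
  have hder := (((h1.const_mul (ζ j)).add_const r).const_mul Complex.I).cexp.const_mul c
  have heq : pd j (fun y => c * Complex.exp (Complex.I * cdot ζ (fun i => (y i : ℂ)))) x
      = deriv (fun t : ℝ => c * Complex.exp (Complex.I * (ζ j * t + r))) (x j) := by
    unfold pd; congr 1; funext t; simp only [key]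
  have hval : ζ j * (x j : ℂ) + r = cdot ζ (fun i => (x i : ℂ)) := by rw [hr]; ring
  rw [heq, hder.deriv, hval]; ring

/-- The single-mode computation behind the explicit representation of the transparent
boundary (Dirichlet-to-Neumann) operator: for `ζ = α + βe₃` with horizontal `α`, `β ≠ 0`,
`α·α + β² = k²`, tangential `Ẽ`, `C = Ẽ×e₃ − β⁻¹(α·(Ẽ×e₃))e₃`, `E(x) = C exp(iζ·x)`,
one has `ζ·C = 0`, `e₃×E = Ẽ exp(iζ·x)`, and
`(e₃×curl E)×e₃ = −(1/(iβ))[k²Ẽ − (α·Ẽ)α] exp(iζ·x)`. -/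
theorem dirichlet_to_neumann_symbol_identity (k : ℝ) (hk : 0 < k)
    (α : Fin 3 → ℝ) (hα : α 2 = 0) (β : ℂ) (hβ : β ≠ 0)
    (hdisp : cdot (fun j => (α j : ℂ)) (fun j => (α j : ℂ)) + β^2 = (k : ℂ)^2)
    (Et : Fin 3 → ℂ) (hEt : Et 2 = 0)
    (ζ : Fin 3 → ℂ) (hζ : ζ = fun j => (α j : ℂ) + β * e3c j)
    (C : Fin 3 → ℂ)
    (hC : C = fun j => ccross Et e3c j - β⁻¹ * cdot (fun i => (α i : ℂ)) (ccross Et e3c) * e3c j)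
    (E : (Fin 3 → ℝ) → Fin 3 → ℂ)
    (hE : E = fun x j => C j * Complex.exp (Complex.I * cdot ζ (fun i => (x i : ℂ)))) :
    cdot ζ C = 0 ∧
    (∀ x : Fin 3 → ℝ,
      ccross e3c (E x) = fun j => Et j * Complex.exp (Complex.I * cdot ζ (fun i => (x i : ℂ)))) ∧
    (∀ x : Fin 3 → ℝ,
      ccross (ccross e3c (curl3 E x)) e3c = fun j =>
        -(1 / (Complex.I * β)) *
          ((k : ℂ)^2 * Et j - cdot (fun i => (α i : ℂ)) Et * (α j : ℂ)) *
          Complex.exp (Complex.I * cdot ζ (fun i => (x i : ℂ)))) := by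
  refine ⟨?_, ?_, ?_⟩
  · subst hζ hC
    simp only [cdot, ccross, e3c, hα]
    push_cast
    field_simp
    ring
  · intro x; subst hE
    funext j; fin_cases j <;>
      simp [ccross, e3c, hC, cdot, hEt] <;> ring
  · intro x; subst hE
    funext j
    simp only [curl3, pd_exp]
    rw [← hdisp]
    fin_cases j <;> simp [ccross, e3c, hC, hζ, cdot, hα, hEt] <;> field_simp <;> ring_nf
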